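/- Let U be a unitary on N qubits commuting with (e^{iθZ})^⊗N for all θ ∈ ℝ and such that U is Clifford. Then there exists a permutation σ ∈ S_N with U Zⱼ U† = Z_{σ(j)} for all j = 1, …, N. -/

import Mathlib

open Matrix MeasureTheory

/-- Basis index for `N` qubits. -/
abbrev QubitIdx (N : ℕ) := Fin N → Fin 2

/-- Linear operators on the Hilbert space `(ℂ²)^⊗N`, as matrices. -/
abbrev Op (N : ℕ) := Matrix (QubitIdx N) (QubitIdx N) ℂ

/-- The single-qubit Pauli matrices I, X, Y, Z. -/
noncomputable def σ1 : Fin 4 → Matrix (Fin 2) (Fin 2) ℂ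
  | 0 => 1
  | 1 => !![0, 1; 1, 0]
  | 2 => !![0, -Complex.I; Complex.I, 0]
  | 3 => !![1, 0; 0, -1]

/-- The unsigned Pauli operator on `N` qubits indexed by `a : Fin N → Fin 4`
(the Kronecker product of the single-qubit Paulis `σ1 (a k)`). -/
noncomputable def pauli {N : ℕ} (a : Fin N → Fin 4) : Op N :=
  Matrix.of fun i j => ∏ k, σ1 (a k) (i k) (j k)

/-- The phase factors `{±1, ±i}`. -/
def phases : Set ℂ := {1, -1, Complex.I, -Complex.I}

/-- The Pauli group on `N` qubits: phased unsigned Paulis. -/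
def PauliGroup (N : ℕ) : Set (Op N) :=
  {P | ∃ c ∈ phases, ∃ a : Fin N → Fin 4, P = c • pauli a}

/-- A Clifford operator: a unitary whose conjugation action preserves the Pauli group. -/
def IsClifford {N : ℕ} (U : Op N) : Prop :=
  U ∈ Matrix.unitaryGroup (QubitIdx N) ℂ ∧
    ∀ P ∈ PauliGroup N, U * P * Uᴴ ∈ PauliGroup N

/-- The `G`-symmetric unitary group `U_{N,G}`: unitaries commuting with every element of `G`. -/
def UnitarySym (N : ℕ) (G : Set (Op N)) : Set (Op N) :=
  {U | U ∈ Matrix.unitaryGroup (QubitIdx N) ℂ ∧ ∀ g ∈ G, U * g = g * U}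

/-- The `G`-symmetric Clifford group `C_{N,G}`. -/
def CliffordSym (N : ℕ) (G : Set (Op N)) : Set (Op N) :=
  {U | IsClifford U ∧ U ∈ UnitarySym N G}

/-- `G` is a subgroup of the unitary group on `N` qubits. -/
def IsUnitarySubgroup {N : ℕ} (G : Set (Op N)) : Prop :=
  (∀ g ∈ G, g ∈ Matrix.unitaryGroup (QubitIdx N) ℂ) ∧ (1 : Op N) ∈ G ∧
    (∀ g ∈ G, ∀ h ∈ G, g * h ∈ G) ∧ (∀ g ∈ G, gᴴ ∈ G)

/-- Operators on the `t`-fold tensor power `H^⊗t` of the `N`-qubit Hilbert space. -/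
abbrev BigOp (N t : ℕ) := Matrix (Fin t → QubitIdx N) (Fin t → QubitIdx N) ℂ

/-- The `t`-fold tensor (Kronecker) power `A^⊗t` of an operator `A`. -/
noncomputable def tpow {N : ℕ} (t : ℕ) (A : Op N) : BigOp N t :=
  Matrix.of fun i j => ∏ s, A (i s) (j s)

noncomputable instance OpMeasurableSpace {N : ℕ} : MeasurableSpace (Op N) := borel (Op N)

/-- The `t`-fold twirling channel `Φ_{t,μ}(L) = ∫ U^⊗t L (U^⊗t)† dμ(U)`, defined entrywise. -/
noncomputable def twirl {N : ℕ} (t : ℕ) (μ : Measure (Op N)) (L : BigOp N t) : BigOp N t :=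
  Matrix.of fun i j => ∫ U, (tpow t U * L * (tpow t U)ᴴ) i j ∂μ

/-- The Kronecker power `A^⊗N` of a single-qubit operator, as an operator on `N` qubits. -/
noncomputable def kronPow {N : ℕ} (A : Matrix (Fin 2) (Fin 2) ℂ) : Op N :=
  Matrix.of fun i j => ∏ k, A (i k) (j k)

/-- The single-qubit unitary `e^{iθZ}`. -/
noncomputable def expZ (θ : ℝ) : Matrix (Fin 2) (Fin 2) ℂ :=
  !![Complex.exp ((θ : ℂ) * Complex.I), 0; 0, Complex.exp (-(θ : ℂ) * Complex.I)]

/-- The permutation operator `V_σ` on the threefold tensor power `H^⊗3`. -/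
noncomputable def permOp {N : ℕ} (σ : Equiv.Perm (Fin 3)) : BigOp N 3 :=
  Matrix.of fun i j => if i = j ∘ ⇑σ⁻¹ then 1 else 0

/-- The tensor product `G₁ ⊗ G₂ ⊗ G₃` as an operator on `H^⊗3`. -/
noncomputable def tprod3 {N : ℕ} (G₁ G₂ G₃ : Op N) : BigOp N 3 :=
  Matrix.of fun i j => G₁ (i 0) (j 0) * G₂ (i 1) (j 1) * G₃ (i 2) (j 2)

namespace Stmt16Aux

lemma fin4_cases : ∀ x : Fin 4, x = 0 ∨ x = 1 ∨ x = 2 ∨ x = 3 := by decide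
lemma fin2_cases : ∀ x : Fin 2, x = 0 ∨ x = 1 := by decide

/-- weight of a basis index -/
def dd {N : ℕ} (i : QubitIdx N) : ℝ := ∑ k, (1 - 2 * (i k : ℝ))

/-- diagonal of a Z-type Pauli -/
noncomputable def χ {N : ℕ} (a : Fin N → Fin 4) (i : QubitIdx N) : ℂ :=
  ∏ k, (if a k = 3 then (-1 : ℂ) ^ (i k : ℕ) else 1)

def ez {N : ℕ} (j : Fin N) : Fin N → Fin 4 := fun k => if k = j then 3 else 0

lemma pauli_diag {N : ℕ} (a : Fin N → Fin 4) (h : ∀ k, a k = 0 ∨ a k = 3) :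
    pauli a = Matrix.diagonal (χ a) := by
  ext i i'
  by_cases hii : i = i'
  · subst hii
    simp only [Matrix.diagonal_apply_eq, pauli, Matrix.of_apply, χ]
    refine Finset.prod_congr rfl fun k _ => ?_
    rcases h k with hk | hk <;> rw [hk] <;>
      rcases fin2_cases (i k) with h2 | h2 <;> rw [h2] <;> simp [σ1, Matrix.one_apply]
  · rw [Matrix.diagonal_apply_ne _ hii]
    obtain ⟨k, hk⟩ : ∃ k, i k ≠ i' k := by
      by_contra hc; push_neg at hc; exact hii (funext hc)
    refine Finset.prod_eq_zero (Finset.mem_univ k) ?_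
    rcases h k with h' | h' <;> rw [h'] <;>
      rcases fin2_cases (i k) with h1 | h1 <;> rcases fin2_cases (i' k) with h2 | h2 <;>
        rw [h1, h2] <;> first
          | (exfalso; rw [h1, h2] at hk; exact hk rfl)
          | simp [σ1, Matrix.one_apply]

lemma χ_ez {N : ℕ} (j : Fin N) (i : QubitIdx N) : χ (ez j) i = (-1 : ℂ) ^ (i j : ℕ) := by
  unfold χ ez
  rw [Finset.prod_eq_single j] <;> simp +contextual

lemma kron_diag {N : ℕ} (θ : ℝ) :
    (kronPow (expZ θ) : Op N)
      = Matrix.diagonal (fun i : QubitIdx N => Complex.exp (dd i * θ * Complex.I)) := by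
  ext i i'
  by_cases hii : i = i'
  · subst hii
    simp only [Matrix.diagonal_apply_eq, kronPow, Matrix.of_apply]
    have h1 : ∀ k, expZ θ (i k) (i k) = Complex.exp ((1 - 2 * (i k : ℝ)) * θ * Complex.I) := by
      intro k; rcases fin2_cases (i k) with h | h <;> rw [h] <;> simp [expZ] <;> ring_nf
    rw [Finset.prod_congr rfl fun k _ => h1 k, ← Complex.exp_sum]
    congr 1
    rw [dd]
    push_cast
    rw [Finset.sum_mul, Finset.sum_mul]
  · rw [Matrix.diagonal_apply_ne _ hii]
    obtain ⟨k, hk⟩ : ∃ k, i k ≠ i' k := by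
      by_contra hc; push_neg at hc; exact hii (funext hc)
    refine Finset.prod_eq_zero (Finset.mem_univ k) ?_
    rcases fin2_cases (i k) with h1 | h1 <;> rcases fin2_cases (i' k) with h2 | h2 <;>
      rw [h1, h2] <;> first
        | (exfalso; rw [h1, h2] at hk; exact hk rfl)
        | simp [expZ]

end Stmt16Aux
namespace Stmt16Aux

lemma stepA {N : ℕ} {U : Op N}
    (hcomm : ∀ θ : ℝ, U * kronPow (expZ θ) = kronPow (expZ θ) * U)
    {i i' : QubitIdx N} (h : dd i ≠ dd i') : U i i' = 0 := by
  set θ : ℝ := Real.pi / (dd i' - dd i) with hθ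
  have hne : dd i' - dd i ≠ 0 := sub_ne_zero.mpr (Ne.symm h)
  have h0 := hcomm θ
  rw [kron_diag] at h0
  have h1 : (U * Matrix.diagonal
      (fun i : QubitIdx N => Complex.exp (dd i * θ * Complex.I))) i i'
      = (Matrix.diagonal (fun i : QubitIdx N => Complex.exp (dd i * θ * Complex.I)) * U) i i' := by
    rw [h0]
  rw [Matrix.mul_diagonal, Matrix.diagonal_mul] at h1
  have h2 : ((dd i' - dd i) * θ : ℝ) = Real.pi := by rw [hθ]; field_simp
  have h3 : ((dd i' : ℂ) - (dd i : ℂ)) * (θ : ℂ) = (Real.pi : ℂ) := by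
    exact_mod_cast congrArg (Complex.ofReal) h2
  have h4 : ((dd i' : ℂ)) * θ * Complex.I = (dd i : ℂ) * θ * Complex.I + Real.pi * Complex.I := by
    linear_combination Complex.I * h3
  rw [h4, Complex.exp_add, Complex.exp_pi_mul_I] at h1
  have hE := Complex.exp_ne_zero ((dd i : ℂ) * θ * Complex.I)
  have h5 : (2 : ℂ) * Complex.exp ((dd i : ℂ) * θ * Complex.I) * U i i' = 0 := by
    linear_combination -h1
  rcases mul_eq_zero.mp h5 with h6 | h6
  · exfalso
    rcases mul_eq_zero.mp h6 with h7 | h7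
    · norm_num at h7
    · exact hE h7
  · exact h6

lemma conj_entry {N : ℕ} {U : Op N}
    (hcomm : ∀ θ : ℝ, U * kronPow (expZ θ) = kronPow (expZ θ) * U)
    (f : QubitIdx N → ℂ) {i i' : QubitIdx N} (h : dd i ≠ dd i') :
    (U * Matrix.diagonal f * Uᴴ) i i' = 0 := by
  rw [Matrix.mul_apply]
  refine Finset.sum_eq_zero fun p _ => ?_
  rw [Matrix.mul_diagonal, Matrix.conjTranspose_apply]
  by_cases hp : dd i = dd p
  · have : U i' p = 0 := stepA hcomm (fun hc => h (hp.trans hc.symm))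
    rw [this, star_zero, mul_zero]
  · rw [stepA hcomm hp, zero_mul, zero_mul]

lemma UD_comm {N : ℕ} {U : Op N}
    (hcomm : ∀ θ : ℝ, U * kronPow (expZ θ) = kronPow (expZ θ) * U) :
    U * Matrix.diagonal (fun i : QubitIdx N => (dd i : ℂ))
      = Matrix.diagonal (fun i : QubitIdx N => (dd i : ℂ)) * U := by
  ext i i'
  rw [Matrix.mul_diagonal, Matrix.diagonal_mul]
  by_cases h : dd i = dd i'
  · rw [h]; ring
  · rw [stepA hcomm h]; ring

end Stmt16Aux
namespace Stmt16Aux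

lemma ez_diag {N : ℕ} (j : Fin N) : ∀ k, ez j k = 0 ∨ ez j k = 3 := by
  intro k; unfold ez; split <;> simp

lemma ez_inj {N : ℕ} {j j' : Fin N} (h : ez j = ez j') : j = j' := by
  by_contra hne
  have := congrFun h j
  simp [ez, hne] at this

lemma dd_eq {N : ℕ} (i : QubitIdx N) : (dd i : ℂ) = ∑ k, (-1 : ℂ) ^ (i k : ℕ) := by
  unfold dd
  push_cast
  refine Finset.sum_congr rfl fun k _ => ?_
  rcases fin2_cases (i k) with h | h <;> rw [h] <;> norm_num

lemma ortho {N : ℕ} (a : Fin N → Fin 4) (h : ∀ k, a k = 0 ∨ a k = 3) (k : Fin N) :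
    ∑ i : QubitIdx N, (-1 : ℂ) ^ (i k : ℕ) * χ a i
      = if a = ez k then (2 : ℂ) ^ N else 0 := by
  classical
  have key : ∀ i : QubitIdx N, (-1 : ℂ) ^ (i k : ℕ) * χ a i
      = ∏ k', ((if k' = k then (-1 : ℂ) ^ (i k' : ℕ) else 1) *
               (if a k' = 3 then (-1 : ℂ) ^ (i k' : ℕ) else 1)) := by
    intro i
    rw [Finset.prod_mul_distrib,
      Finset.prod_ite_eq' Finset.univ k (fun k' => (-1 : ℂ) ^ (i k' : ℕ))]
    simp [χ]
  rw [Finset.sum_congr rfl fun i _ => key i,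
    ← Fintype.prod_sum (fun (k' : Fin N) (b : Fin 2) =>
      (if k' = k then (-1 : ℂ) ^ (b : ℕ) else 1) * (if a k' = 3 then (-1 : ℂ) ^ (b : ℕ) else 1))]
  have hsum : ∀ k' : Fin N,
      (∑ b : Fin 2, ((if k' = k then (-1 : ℂ) ^ (b : ℕ) else 1) *
        (if a k' = 3 then (-1 : ℂ) ^ (b : ℕ) else 1)))
      = if (a k' = 3 ↔ k' = k) then 2 else 0 := by
    intro k'
    by_cases h1 : k' = k <;> by_cases h2 : a k' = 3 <;>
      simp [h1, h2, Fin.sum_univ_two] <;> norm_num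
  rw [Finset.prod_congr rfl fun k' _ => hsum k']
  by_cases hak : a = ez k
  · rw [if_pos hak]
    have hall : ∀ k', (a k' = 3 ↔ k' = k) := by
      intro k'; subst hak; unfold ez
      by_cases h1 : k' = k <;> simp [h1]
    rw [Finset.prod_congr rfl fun k' _ => if_pos (hall k')]
    simp
  · rw [if_neg hak]
    have : ∃ k', ¬(a k' = 3 ↔ k' = k) := by
      by_contra hcon
      push_neg at hcon
      refine hak (funext fun k' => ?_)
      by_cases hkk : k' = k
      · subst hkk; simp [ez, (hcon k').mpr rfl]
      · have h3 : a k' ≠ 3 := fun hc => hkk ((hcon k').mp hc)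
        rcases h k' with h0 | h0
        · simp [h0, ez, hkk]
        · exact absurd h0 h3
    obtain ⟨k', hk'⟩ := this
    exact Finset.prod_eq_zero (Finset.mem_univ k') (if_neg hk')

end Stmt16Aux
namespace Stmt16Aux

lemma pauli_ez_inj {N : ℕ} {j j' : Fin N} (h : pauli (ez j) = (pauli (ez j') : Op N)) :
    j = j' := by
  by_contra hne
  classical
  set i : QubitIdx N := fun k => if k = j then 1 else 0 with hi
  have h1 : pauli (ez j) i i = pauli (ez j') i i := by rw [h]
  rw [pauli_diag _ (ez_diag j), pauli_diag _ (ez_diag j')] at h1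
  rw [Matrix.diagonal_apply_eq, Matrix.diagonal_apply_eq, χ_ez, χ_ez] at h1
  have hij : i j = 1 := by simp [hi]
  have hjj : ¬ j' = j := fun hc => hne hc.symm
  have hij' : i j' = 0 := by simp [hi, hjj]
  rw [hij, hij'] at h1
  norm_num at h1

lemma conj_cancel {N : ℕ} {U : Op N} (hU1 : Uᴴ * U = 1) (A : Op N) :
    Uᴴ * (U * A * Uᴴ) * U = A := by
  calc Uᴴ * (U * A * Uᴴ) * U = (Uᴴ * U) * A * (Uᴴ * U) := by noncomm_ring
  _ = A := by rw [hU1, Matrix.one_mul, Matrix.mul_one]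

lemma Zsum {N : ℕ} : (∑ j, pauli (ez j) : Op N)
    = Matrix.diagonal (fun i : QubitIdx N => (dd i : ℂ)) := by
  ext i i'
  rw [Matrix.sum_apply]
  rw [Finset.sum_congr rfl fun j _ => by rw [pauli_diag _ (ez_diag j)]]
  by_cases hii : i = i'
  · subst hii
    rw [Matrix.diagonal_apply_eq, dd_eq]
    rw [Finset.sum_congr rfl fun j _ => Matrix.diagonal_apply_eq _ _]
    rw [Finset.sum_congr rfl fun j _ => χ_ez j i]
  · rw [Matrix.diagonal_apply_ne _ hii]
    rw [Finset.sum_congr rfl fun j _ => Matrix.diagonal_apply_ne _ hii]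
    simp

lemma pauli_ez_herm {N : ℕ} (j : Fin N) : (pauli (ez j) : Op N)ᴴ = pauli (ez j) := by
  rw [pauli_diag _ (ez_diag j), Matrix.diagonal_conjTranspose]
  refine congrArg Matrix.diagonal (funext fun i => ?_)
  rw [Pi.star_apply, χ_ez]
  simp

lemma χ_zero {N : ℕ} (a : Fin N → Fin 4) : χ a (fun _ => 0) = 1 := by
  unfold χ
  refine Finset.prod_eq_one fun k _ => ?_
  split <;> simp

end Stmt16Aux
open Stmt16Aux

/-- a Clifford unitary commuting with `(e^{iθZ})^⊗N` for all `θ`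
permutes the single-qubit Pauli-Z operators: `U Zⱼ U† = Z_{σ(j)}`. -/
theorem stmt16 {N : ℕ} (U : Op N) (hU : IsClifford U)
    (hcomm : ∀ θ : ℝ, U * kronPow (expZ θ) = kronPow (expZ θ) * U) :
    ∃ σ : Equiv.Perm (Fin N), ∀ j : Fin N,
      U * pauli (fun k => if k = j then 3 else 0) * Uᴴ =
        pauli (fun k => if k = σ j then 3 else 0) := by
  classical
  obtain ⟨hUU, hCl⟩ := hU
  have hU1 : Uᴴ * U = 1 := by
    have := hUU.1
    rwa [Matrix.star_eq_conjTranspose] at this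
  have hU2 : U * Uᴴ = 1 := by
    have := hUU.2
    rwa [Matrix.star_eq_conjTranspose] at this
  -- the conjugated Paulis
  have hP : ∀ j : Fin N, ∃ c ∈ phases, ∃ a : Fin N → Fin 4,
      U * pauli (ez j) * Uᴴ = c • pauli a := by
    intro j
    exact hCl _ ⟨1, by simp [phases], ez j, (one_smul _ _).symm⟩
  choose c hcph a hPa using hP
  have hcne : ∀ j, c j ≠ 0 := by
    intro j
    have := hcph j
    simp only [phases, Set.mem_insert_iff, Set.mem_singleton_iff] at this
    rcases this with h | h | h | h <;> rw [h] <;> norm_num [Complex.I_ne_zero]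
  -- Step B : each a j is Z-type
  have hdiag : ∀ j k, a j k = 0 ∨ a j k = 3 := by
    intro j k
    by_contra hcon
    push_neg at hcon
    obtain ⟨h0, h3⟩ := hcon
    set i : QubitIdx N := fun _ => 0 with hidef
    set i' : QubitIdx N := fun k' => if a j k' = 1 ∨ a j k' = 2 then 1 else 0 with hi'def
    have hk12 : a j k = 1 ∨ a j k = 2 := by
      rcases fin4_cases (a j k) with h | h | h | h
      · exact absurd h h0
      · exact Or.inl h
      · exact Or.inr h
      · exact absurd h h3
    have hdd : dd i ≠ dd i' := by
      have hlt : dd i' < dd i := by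
        unfold dd
        refine Finset.sum_lt_sum (fun k' _ => ?_) ⟨k, Finset.mem_univ k, ?_⟩
        · have h1 : (0:ℝ) ≤ (i' k' : ℝ) := by positivity
          have h2 : i k' = 0 := rfl
          rw [h2]
          push_cast [Fin.val_zero]
          linarith
        · have h1 : i' k = 1 := by rw [hi'def]; simp [hk12]
          have h2 : i k = 0 := rfl
          rw [h1, h2]
          push_cast [Fin.val_zero, Fin.val_one]
          norm_num
      exact fun hc => absurd hc.symm (ne_of_lt hlt)
    have hz : (U * pauli (ez j) * Uᴴ) i i' = 0 := by
      rw [pauli_diag _ (ez_diag j)]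
      exact conj_entry hcomm _ hdd
    rw [hPa j] at hz
    have hz2 : c j * pauli (a j) i i' = 0 := by
      rw [← hz]; simp
    rcases mul_eq_zero.mp hz2 with h | h
    · exact hcne j h
    · have : ∀ k' : Fin N, σ1 (a j k') (i k') (i' k') ≠ 0 := by
        intro k'
        have h2 : i k' = 0 := rfl
        rcases fin4_cases (a j k') with hh | hh | hh | hh
        · have hv : i' k' = 0 := by rw [hi'def]; simp [hh]
          rw [hh, h2, hv]; norm_num [σ1, Matrix.one_apply]
        · have hv : i' k' = 1 := by rw [hi'def]; simp [hh]
          rw [hh, h2, hv]; norm_num [σ1]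
        · have hv : i' k' = 1 := by rw [hi'def]; simp [hh]
          rw [hh, h2, hv]; norm_num [σ1, Complex.I_ne_zero]
        · have hv : i' k' = 0 := by rw [hi'def]; simp [hh]
          rw [hh, h2, hv]; norm_num [σ1]
      exact absurd h (by
        simp only [pauli, Matrix.of_apply]
        exact Finset.prod_ne_zero_iff.mpr fun k' _ => this k')
  -- Step C : c j = ±1
  have hc1 : ∀ j, c j = 1 ∨ c j = -1 := by
    intro j
    set i0 : QubitIdx N := fun _ => 0 with hi0
    have hherm : (U * pauli (ez j) * Uᴴ)ᴴ = U * pauli (ez j) * Uᴴ := by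
      rw [Matrix.conjTranspose_mul, Matrix.conjTranspose_mul,
        Matrix.conjTranspose_conjTranspose, pauli_ez_herm, Matrix.mul_assoc]
    have hent : star ((U * pauli (ez j) * Uᴴ) i0 i0) = (U * pauli (ez j) * Uᴴ) i0 i0 := by
      conv_lhs => rw [← Matrix.conjTranspose_apply]
      rw [hherm]
    rw [hPa j] at hent
    have hPe : (c j • pauli (a j)) i0 i0 = c j := by
      rw [Matrix.smul_apply, pauli_diag _ (hdiag j), Matrix.diagonal_apply_eq, χ_zero]
      simp
    rw [hPe] at hent
    have := hcph j
    simp only [phases, Set.mem_insert_iff, Set.mem_singleton_iff] at this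
    rcases this with h | h | h | h
    · exact Or.inl h
    · exact Or.inr h
    · rw [h] at hent; rw [Complex.star_def, Complex.conj_I] at hent
      exfalso; have := Complex.I_ne_zero; apply this; linear_combination -hent/2
    · rw [h] at hent
      exfalso
      have h2 : star (Complex.I) = -Complex.I := by rw [Complex.star_def, Complex.conj_I]
      rw [star_neg, h2] at hent
      have := Complex.I_ne_zero; apply this; linear_combination hent/2
  -- Step D : sum equation
  have hsum_eq : ∀ i : QubitIdx N, (∑ j, c j * χ (a j) i) = (dd i : ℂ) := by
    have h2 : (∑ j : Fin N, (c j • pauli (a j)) : Op N)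
        = Matrix.diagonal (fun i : QubitIdx N => (dd i : ℂ)) := by
      calc (∑ j : Fin N, (c j • pauli (a j)) : Op N)
          = ∑ j : Fin N, U * pauli (ez j) * Uᴴ :=
            Finset.sum_congr rfl fun j _ => (hPa j).symm
        _ = U * (∑ j, pauli (ez j)) * Uᴴ := by rw [Finset.mul_sum, Finset.sum_mul]
        _ = U * Matrix.diagonal (fun i : QubitIdx N => (dd i : ℂ)) * Uᴴ := by rw [Zsum]
        _ = Matrix.diagonal (fun i : QubitIdx N => (dd i : ℂ)) * (U * Uᴴ) := by
            rw [UD_comm hcomm, Matrix.mul_assoc]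
        _ = Matrix.diagonal (fun i : QubitIdx N => (dd i : ℂ)) := by
            rw [hU2, Matrix.mul_one]
    intro i
    have h3 : (∑ j : Fin N, (c j • pauli (a j)) : Op N) i i
        = Matrix.diagonal (fun i : QubitIdx N => (dd i : ℂ)) i i := by rw [h2]
    rw [Matrix.diagonal_apply_eq] at h3
    rw [← h3, Matrix.sum_apply]
    refine Finset.sum_congr rfl fun j _ => ?_
    rw [Matrix.smul_apply, pauli_diag _ (hdiag j), Matrix.diagonal_apply_eq, smul_eq_mul]
  -- Step E : Fourier coefficient at ez k
  have hE : ∀ k : Fin N, (∑ j ∈ Finset.univ.filter (fun j => a j = ez k), c j) = 1 := by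
    intro k
    have h1 : ∑ i : QubitIdx N, (-1:ℂ)^(i k : ℕ) * (∑ j, c j * χ (a j) i)
        = ∑ i : QubitIdx N, (-1:ℂ)^(i k : ℕ) * (dd i : ℂ) :=
      Finset.sum_congr rfl fun i _ => by rw [hsum_eq i]
    have hL : ∑ i : QubitIdx N, (-1:ℂ)^(i k : ℕ) * (∑ j, c j * χ (a j) i)
        = (∑ j ∈ Finset.univ.filter (fun j => a j = ez k), c j) * (2:ℂ)^N := by
      calc ∑ i : QubitIdx N, (-1:ℂ)^(i k : ℕ) * (∑ j, c j * χ (a j) i)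
          = ∑ i : QubitIdx N, ∑ j, c j * ((-1:ℂ)^(i k : ℕ) * χ (a j) i) := by
            refine Finset.sum_congr rfl fun i _ => ?_
            rw [Finset.mul_sum]
            exact Finset.sum_congr rfl fun j _ => by ring
        _ = ∑ j, c j * ∑ i : QubitIdx N, (-1:ℂ)^(i k : ℕ) * χ (a j) i := by
            rw [Finset.sum_comm]
            exact Finset.sum_congr rfl fun j _ => by rw [Finset.mul_sum]
        _ = ∑ j, c j * (if a j = ez k then (2:ℂ)^N else 0) := by
            exact Finset.sum_congr rfl fun j _ => by rw [ortho (a j) (hdiag j) k]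
        _ = ∑ j ∈ Finset.univ.filter (fun j => a j = ez k), c j * (2:ℂ)^N := by
            rw [Finset.sum_filter]
            exact Finset.sum_congr rfl fun j _ => by split <;> simp
        _ = (∑ j ∈ Finset.univ.filter (fun j => a j = ez k), c j) * (2:ℂ)^N := by
            rw [Finset.sum_mul]
    have hR : ∑ i : QubitIdx N, (-1:ℂ)^(i k : ℕ) * (dd i : ℂ) = (2:ℂ)^N := by
      calc ∑ i : QubitIdx N, (-1:ℂ)^(i k : ℕ) * (dd i : ℂ)
          = ∑ i : QubitIdx N, ∑ k', (-1:ℂ)^(i k : ℕ) * χ (ez k') i := by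
            refine Finset.sum_congr rfl fun i _ => ?_
            rw [dd_eq, Finset.mul_sum]
            exact Finset.sum_congr rfl fun k' _ => by rw [χ_ez]
        _ = ∑ k', ∑ i : QubitIdx N, (-1:ℂ)^(i k : ℕ) * χ (ez k') i := Finset.sum_comm
        _ = ∑ k' : Fin N, (if ez k' = ez k then (2:ℂ)^N else 0) :=
            Finset.sum_congr rfl fun k' _ => ortho (ez k') (ez_diag k') k
        _ = (2:ℂ)^N := by
            have heq : ∀ k' : Fin N, (if ez k' = ez k then (2:ℂ)^N else 0)
                = (if k' = k then (2:ℂ)^N else 0) := by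
              intro k'
              by_cases h : k' = k
              · subst h; simp
              · rw [if_neg (fun hc => h (ez_inj hc)), if_neg h]
            rw [Finset.sum_congr rfl fun k' _ => heq k']
            simp
    rw [hL, hR] at h1
    have h2N : (2:ℂ)^N ≠ 0 := pow_ne_zero _ two_ne_zero
    calc (∑ j ∈ Finset.univ.filter (fun j => a j = ez k), c j)
        = (∑ j ∈ Finset.univ.filter (fun j => a j = ez k), c j) * (2:ℂ)^N / (2:ℂ)^N := by
          field_simp
      _ = 1 := by rw [h1]; field_simp
  -- injectivity of the conjugation data
  have hinj : ∀ j j', a j = a j' → c j = c j' → j = j' := by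
    intro j j' ha hcc
    have h1 : U * pauli (ez j) * Uᴴ = U * pauli (ez j') * Uᴴ := by
      rw [hPa j, hPa j', ha, hcc]
    have h2 : pauli (ez j) = (pauli (ez j') : Op N) := by
      have := congrArg (fun M => Uᴴ * M * U) h1
      simpa only [conj_cancel hU1] using this
    exact pauli_ez_inj h2
  -- uniqueness of preimage
  have huniq : ∀ k : Fin N, ∃! j : Fin N, a j = ez k ∧ c j = 1 := by
    intro k
    set F : Finset (Fin N) := Finset.univ.filter (fun j => a j = ez k) with hF
    set F1 : Finset (Fin N) := F.filter (fun j => c j = 1) with hF1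
    set F2 : Finset (Fin N) := F.filter (fun j => ¬ c j = 1) with hF2
    have hcard1 : F1.card ≤ 1 := by
      refine Finset.card_le_one.mpr fun j hj j' hj' => ?_
      simp only [hF1, hF, Finset.mem_filter, Finset.mem_univ, true_and] at hj hj'
      exact hinj j j' (hj.1.trans hj'.1.symm) (hj.2.trans hj'.2.symm)
    have hcard2 : F2.card ≤ 1 := by
      refine Finset.card_le_one.mpr fun j hj j' hj' => ?_
      simp only [hF2, hF, Finset.mem_filter, Finset.mem_univ, true_and] at hj hj'
      have hcj : c j = -1 := (hc1 j).resolve_left hj.2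
      have hcj' : c j' = -1 := (hc1 j').resolve_left hj'.2
      exact hinj j j' (hj.1.trans hj'.1.symm) (hcj.trans hcj'.symm)
    have hsplit : (∑ j ∈ F1, c j) + (∑ j ∈ F2, c j) = 1 := by
      rw [Finset.sum_filter_add_sum_filter_not F (fun j => c j = 1) c]
      exact hE k
    have hs1 : (∑ j ∈ F1, c j) = (F1.card : ℂ) := by
      rw [Finset.sum_congr rfl (fun j hj => (Finset.mem_filter.mp hj).2)]
      simp
      rfl
    have hs2 : (∑ j ∈ F2, c j) = -(F2.card : ℂ) := by
      rw [Finset.sum_congr rfl (fun j hj =>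
        (hc1 j).resolve_left (Finset.mem_filter.mp hj).2)]
      simp
      rfl
    rw [hs1, hs2] at hsplit
    have hc1card : F1.card = 1 := by
      rcases Nat.le_one_iff_eq_zero_or_eq_one.mp hcard1 with h1 | h1 <;>
        rcases Nat.le_one_iff_eq_zero_or_eq_one.mp hcard2 with h2 | h2 <;>
          rw [h1, h2] at hsplit <;> norm_num at hsplit <;> exact h1
    obtain ⟨j0, hj0⟩ := Finset.card_eq_one.mp hc1card
    have hj0mem : j0 ∈ F1 := by rw [hj0]; exact Finset.mem_singleton_self j0
    simp only [hF1, hF, Finset.mem_filter, Finset.mem_univ, true_and] at hj0mem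
    refine ⟨j0, ⟨hj0mem.1, hj0mem.2⟩, fun j' hj' => ?_⟩
    have : j' ∈ F1 := by
      simp only [hF1, hF, Finset.mem_filter, Finset.mem_univ, true_and]
      exact ⟨hj'.1, hj'.2⟩
    rw [hj0] at this
    exact Finset.mem_singleton.mp this
  -- build the permutation
  choose τ hτ hτu using huniq
  have hτinj : Function.Injective τ := by
    intro k k' h
    have h1 := (hτ k).1
    have h2 := (hτ k').1
    rw [h] at h1
    exact ez_inj (h1.symm.trans h2)
  have hτbij : Function.Bijective τ := (Finite.injective_iff_bijective).mp hτinj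
  set σ : Equiv.Perm (Fin N) := Equiv.ofBijective τ hτbij with hσ
  refine ⟨σ.symm, fun j => ?_⟩
  have hk : τ (σ.symm j) = j := σ.apply_symm_apply j
  show U * pauli (ez j) * Uᴴ = pauli (ez (σ.symm j))
  rw [hPa j]
  have h1 := (hτ (σ.symm j)).1
  have h2 := (hτ (σ.symm j)).2
  rw [hk] at h1 h2
  rw [h1, h2, one_smul]
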